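/- arXiv:1803.06697 — 3 statements merged into one kernel-verified Lean document; each statement's English description precedes it below -/
import Mathlib

section
/- For all integers e ≥ 1, N ≥ 1, k ≥ 1 and all α ∈ (0,1) there exists a constant C = C(e,N,k,α) such that for every ℤ^e-periodic map σ : ℝ^e → ℝ^N of class C^k whose k-th derivative is α-Hölder continuous, one has sup_{ℝ^e} ‖Dσ‖ ≤ C · [D^k σ]_{C^α(ℝ^e)}. (This is the statement, for the flat torus T^e = ℝ^e/ℤ^e and the trivial bundle, that on a compact manifold without boundary the sup-norm of the first derivative of a section is controlled by the Hölder seminorm of its k-th derivative alone; the analogous estimate fails on manifolds with boundary.) -/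
noncomputable section

/-- The Euclidean norm on a finite product. -/
def eunorm {ι : Type*} [Fintype ι] {E : Type*} [Norm E] (x : ι → E) : ℝ :=
  Real.sqrt (∑ i, ‖x i‖ ^ 2)

open Set

/-- Iterated derivatives of a periodic function are periodic. -/
lemma iter_periodic {E F : Type*} [NormedAddCommGroup E] [NormedSpace ℝ E]
    [NormedAddCommGroup F] [NormedSpace ℝ F]
    {σ : E → F} {k : ℕ} (hσ : ContDiff ℝ (k : ℕ) σ) (c : E)
    (hper : ∀ x, σ (x + c) = σ x) :
    ∀ n, n ≤ k → ∀ x, iteratedFDeriv ℝ n σ (x + c) = iteratedFDeriv ℝ n σ x := by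
  intro n
  induction n with
  | zero => intro _ x; ext m; simp [hper x]
  | succ n IH =>
    intro hn x
    have hlt : n < k := Nat.lt_of_succ_le hn
    have hdiff : Differentiable ℝ (iteratedFDeriv ℝ n σ) :=
      hσ.differentiable_iteratedFDeriv (by exact_mod_cast hlt)
    have hfun : (fun y => iteratedFDeriv ℝ n σ (y + c)) = iteratedFDeriv ℝ n σ :=
      funext fun y => IH hlt.le y
    have h1 : HasFDerivAt (fun y => iteratedFDeriv ℝ n σ (y + c))
        (fderiv ℝ (iteratedFDeriv ℝ n σ) (x + c)) x := by
      have h2 : HasFDerivAt (fun y : E => y + c) (ContinuousLinearMap.id ℝ E) x := by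
        simpa using (hasFDerivAt_id x).add_const c
      have h3 := ((hdiff (x + c)).hasFDerivAt).comp x h2
      simp only [ContinuousLinearMap.comp_id] at h3
      exact h3
    rw [hfun] at h1
    simp only [iteratedFDeriv_succ_eq_comp_left, Function.comp_apply]
    rw [← h1.fderiv]

set_option maxHeartbeats 1000000 in
set_option synthInstance.maxHeartbeats 1000000 in
/-- Key step: if the `(m+1)`-st derivative oscillates at most `D` along unit lattice
segments, and the `m`-th derivative is lattice periodic, then `‖D^{m+1}σ‖ ≤ e·D`. -/
lemma key_step {e : ℕ} {F : Type*} [NormedAddCommGroup F] [NormedSpace ℝ F] [CompleteSpace F]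
    {σ : (Fin e → ℝ) → F} {k m : ℕ} (hσ : ContDiff ℝ (k : ℕ) σ) (hm : m + 1 ≤ k)
    (hper : ∀ (i : Fin e) x,
      iteratedFDeriv ℝ m σ (x + Pi.single i 1) = iteratedFDeriv ℝ m σ x)
    {D : ℝ} (hD : 0 ≤ D)
    (hbound : ∀ x (i : Fin e), ∀ t ∈ Set.Icc (0:ℝ) 1,
      ‖iteratedFDeriv ℝ (m + 1) σ x
        - iteratedFDeriv ℝ (m + 1) σ (x + t • (Pi.single i 1 : Fin e → ℝ))‖ ≤ D) :
    ∀ x, ‖iteratedFDeriv ℝ (m + 1) σ x‖ ≤ e * D := by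
  intro x
  set Φ := fderiv ℝ (iteratedFDeriv ℝ m σ) with hΦ
  have hnorm : ∀ y, ‖iteratedFDeriv ℝ (m + 1) σ y‖ = ‖Φ y‖ := fun y =>
    (norm_fderiv_iteratedFDeriv (𝕜 := ℝ)).symm
  have hdiffm : Differentiable ℝ (iteratedFDeriv ℝ m σ) :=
    hσ.differentiable_iteratedFDeriv (by exact_mod_cast Nat.lt_of_succ_le hm)
  have hΦcont : Continuous Φ := by
    rw [hΦ, fderiv_iteratedFDeriv]
    exact (LinearIsometryEquiv.continuous _).comp
      (hσ.continuous_iteratedFDeriv (by exact_mod_cast hm))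
  have hΦdiff : ∀ y z, ‖Φ y - Φ z‖
      = ‖iteratedFDeriv ℝ (m + 1) σ y - iteratedFDeriv ℝ (m + 1) σ z‖ := by
    intro y z
    rw [hΦ, fderiv_iteratedFDeriv]
    simp only [Function.comp_apply]
    rw [← LinearIsometryEquiv.map_sub, LinearIsometryEquiv.norm_map]
  -- bound on basis vectors
  have hbasis : ∀ i : Fin e, ‖Φ x (Pi.single i 1)‖ ≤ D := by
    intro i
    set c : Fin e → ℝ := Pi.single i 1 with hc
    have hcnorm : ‖c‖ = 1 := by rw [hc, Pi.norm_single]; simp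
    have hline : ∀ t : ℝ, HasDerivAt (fun s : ℝ => x + s • c) c t := by
      intro t
      simpa using ((hasDerivAt_id t).smul_const c).const_add x
    have hg : ∀ t : ℝ, HasDerivAt (fun s => iteratedFDeriv ℝ m σ (x + s • c))
        (Φ (x + t • c) c) t := fun t =>
      ((hdiffm (x + t • c)).hasFDerivAt).comp_hasDerivAt t (hline t)
    have hcont : Continuous fun t : ℝ => Φ (x + t • c) c := by
      have : Continuous fun t : ℝ => x + t • c := by continuity
      exact (ContinuousLinearMap.apply ℝ _ c).continuous.comp (hΦcont.comp this)
    have hint : (∫ t in (0:ℝ)..1, Φ (x + t • c) c) = 0 := by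
      rw [intervalIntegral.integral_eq_sub_of_hasDerivAt (fun t _ => hg t)
        (hcont.intervalIntegrable 0 1)]
      simp
      rw [hc, hper i x, sub_self]
    have heq : Φ x c = ∫ t in (0:ℝ)..1, (Φ x c - Φ (x + t • c) c) := by
      rw [intervalIntegral.integral_sub intervalIntegrable_const
        (hcont.intervalIntegrable 0 1), hint, intervalIntegral.integral_const]
      simp
    rw [heq]
    have := intervalIntegral.norm_integral_le_of_norm_le_const
      (a := 0) (b := 1) (C := D) (f := fun t => Φ x c - Φ (x + t • c) c) ?_
    · simpa using this
    · intro t ht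
      rw [Set.uIoc_of_le (by norm_num)] at ht
      have ht' : t ∈ Set.Icc (0:ℝ) 1 := ⟨ht.1.le, ht.2⟩
      calc ‖Φ x c - Φ (x + t • c) c‖ = ‖(Φ x - Φ (x + t • c)) c‖ := by
            simp [ContinuousLinearMap.sub_apply]
        _ ≤ ‖Φ x - Φ (x + t • c)‖ * ‖c‖ := (Φ x - Φ (x + t • c)).le_opNorm c
        _ ≤ D := by rw [hcnorm, mul_one, hΦdiff]; exact hbound x i t ht'
  -- from basis bound to operator norm bound
  rw [hnorm]
  refine (Φ x).opNorm_le_bound (by positivity) (fun v => ?_)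
  have hv : v = ∑ i, v i • (Pi.single i 1 : Fin e → ℝ) := by
    ext l
    simp [Pi.single_apply, Finset.sum_apply]
  calc ‖Φ x v‖ = ‖∑ i, v i • Φ x (Pi.single i 1)‖ := by
        conv_lhs => rw [hv]
        rw [map_sum]
        simp only [map_smul]
    _ ≤ ∑ i, ‖v i • Φ x (Pi.single i 1)‖ := norm_sum_le _ _
    _ ≤ ∑ _i : Fin e, ‖v‖ * D := by
        refine Finset.sum_le_sum fun i _ => ?_
        refine le_trans (norm_smul_le (v i) ((Φ x) (Pi.single i 1 : Fin e → ℝ))) ?_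
        exact mul_le_mul (norm_le_pi_norm v i) (hbasis i) (norm_nonneg _) (norm_nonneg _)
    _ = e * D * ‖v‖ := by simp [Finset.sum_const]; ring

/-- **Sup-norm of the first derivative controlled by the Hölder seminorm of the `k`-th
derivative on the flat torus `T^e = ℝ^e/ℤ^e`** (the flat-torus case of Lemma 3.3 of
Hein–Tosatti): for every `ℤ^e`-periodic `σ : ℝ^e → ℝ^N` of class `C^{k,α}`,
`sup ‖Dσ‖ ≤ C [D^k σ]_{C^α}`. -/
theorem first_derivative_bound_torus
    (e N k : ℕ) (he : 1 ≤ e) (hN : 1 ≤ N) (hk : 1 ≤ k)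
    (α : ℝ) (hα0 : 0 < α) (hα1 : α < 1) :
    ∃ C : ℝ, 0 < C ∧
      ∀ σ : (Fin e → ℝ) → (Fin N → ℝ),
        ContDiff ℝ (k : ℕ) σ →
        (∀ v : Fin e → ℤ, ∀ x, σ (x + fun i => (v i : ℝ)) = σ x) →
        ∀ M : ℝ,
        (∀ x x', ‖iteratedFDeriv ℝ k σ x - iteratedFDeriv ℝ k σ x'‖
          ≤ M * eunorm (x - x') ^ α) →
        ∀ x, ‖fderiv ℝ σ x‖ ≤ C * M := by
  have he0 : (0:ℝ) < e := by exact_mod_cast Nat.lt_of_lt_of_le Nat.zero_lt_one he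
  refine ⟨(e:ℝ)^k, by positivity, ?_⟩
  intro σ hσ hper M hM
  -- periodicity in basis directions
  have hper1 : ∀ (i : Fin e) x, σ (x + Pi.single i 1) = σ x := by
    intro i x
    have h := hper (Pi.single i 1) x
    have hco : (fun l => ((Pi.single i 1 : Fin e → ℤ) l : ℝ)) = (Pi.single i (1:ℝ)) := by
      ext l; by_cases h : l = i <;> simp [Pi.single_apply, h]
    rwa [hco] at h
  have hpiter : ∀ n, n ≤ k → ∀ (i : Fin e) x,
      iteratedFDeriv ℝ n σ (x + Pi.single i 1) = iteratedFDeriv ℝ n σ x :=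
    fun n hn i x => iter_periodic hσ _ (hper1 i) n hn x
  -- Euclidean norm along a basis segment
  have heun : ∀ (i : Fin e) (x : Fin e → ℝ) (t : ℝ),
      eunorm (x - (x + t • (Pi.single i 1 : Fin e → ℝ))) = |t| := by
    intro i x t
    have hx : x - (x + t • (Pi.single i 1 : Fin e → ℝ))
        = -(t • (Pi.single i 1 : Fin e → ℝ)) := by abel
    rw [hx]
    unfold eunorm
    have hterm : ∀ l : Fin e, ‖(-(t • (Pi.single i 1 : Fin e → ℝ))) l‖ ^ 2
        = if l = i then t ^ 2 else 0 := by
      intro l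
      by_cases h : l = i <;>
        simp [Pi.single_apply, h, Real.norm_eq_abs, sq_abs]
    rw [Finset.sum_congr rfl (fun l _ => hterm l), Finset.sum_ite_eq' Finset.univ i
      (fun _ => t ^ 2), if_pos (Finset.mem_univ i), Real.sqrt_sq_eq_abs]
  -- M is nonnegative
  have hM0 : 0 ≤ M := by
    set i0 : Fin e := ⟨0, he⟩
    have h := hM 0 (0 + (1:ℝ) • (Pi.single i0 1 : Fin e → ℝ))
    rw [heun i0 0 1] at h
    simpa [Real.one_rpow] using (norm_nonneg _).trans h
  -- norm of a basis vector segment in the sup norm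
  have hsegnorm : ∀ (i : Fin e) (y : Fin e → ℝ) (t : ℝ), 0 ≤ t →
      ‖y - (y + t • (Pi.single i 1 : Fin e → ℝ))‖ = t := by
    intro i y t ht
    have hx : y - (y + t • (Pi.single i 1 : Fin e → ℝ))
        = -(t • (Pi.single i 1 : Fin e → ℝ)) := by abel
    rw [hx, norm_neg, norm_smul, Pi.norm_single, Real.norm_eq_abs, abs_of_nonneg ht]
    simp
  -- main induction
  have main : ∀ d j, j + 1 + d = k → ∀ x,
      ‖iteratedFDeriv ℝ (j+1) σ x‖ ≤ (e:ℝ)^(d+1) * M := by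
    intro d
    induction d with
    | zero =>
      intro j hj x
      have hjk : j + 1 = k := by omega
      have hbound : ∀ y (i : Fin e), ∀ t ∈ Set.Icc (0:ℝ) 1,
          ‖iteratedFDeriv ℝ (j+1) σ y
            - iteratedFDeriv ℝ (j+1) σ (y + t • (Pi.single i 1 : Fin e → ℝ))‖ ≤ M := by
        intro y i t ht
        have h1 : ‖iteratedFDeriv ℝ (j+1) σ y
            - iteratedFDeriv ℝ (j+1) σ (y + t • (Pi.single i 1 : Fin e → ℝ))‖
            ≤ M * eunorm (y - (y + t • (Pi.single i 1 : Fin e → ℝ))) ^ α := by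
          rw [hjk]; exact hM _ _
        refine h1.trans ?_
        rw [heun i y t, abs_of_nonneg ht.1]
        have : t ^ α ≤ 1 := Real.rpow_le_one ht.1 ht.2 hα0.le
        nlinarith
      have h := key_step hσ (by omega) (hpiter j (by omega)) hM0 hbound x
      simpa [pow_one] using h
    | succ d IH =>
      intro j hj x
      have IH' := IH (j+1) (by omega)
      have hfb : ∀ z, ‖fderiv ℝ (iteratedFDeriv ℝ (j+1) σ) z‖ ≤ (e:ℝ)^(d+1) * M := by
        intro z; rw [norm_fderiv_iteratedFDeriv]; exact IH' z
      have hdiff : ∀ z, DifferentiableAt ℝ (iteratedFDeriv ℝ (j+1) σ) z := fun z =>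
        (hσ.differentiable_iteratedFDeriv (by exact_mod_cast (by omega : j+1 < k))) z
      have hbound : ∀ y (i : Fin e), ∀ t ∈ Set.Icc (0:ℝ) 1,
          ‖iteratedFDeriv ℝ (j+1) σ y
            - iteratedFDeriv ℝ (j+1) σ (y + t • (Pi.single i 1 : Fin e → ℝ))‖
            ≤ (e:ℝ)^(d+1) * M := by
        intro y i t ht
        have h1 := Convex.norm_image_sub_le_of_norm_fderiv_le (fun z _ => hdiff z)
          (fun z _ => hfb z) convex_univ
          (Set.mem_univ (y + t • (Pi.single i 1 : Fin e → ℝ))) (Set.mem_univ y)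
        refine h1.trans ?_
        rw [hsegnorm i y t ht.1]
        have h2 : (0:ℝ) ≤ (e:ℝ)^(d+1) * M := by positivity
        nlinarith [ht.2]
      have h := key_step hσ (by omega) (hpiter j (by omega)) (by positivity) hbound x
      refine h.trans ?_
      rw [pow_succ]
      ring_nf
      nlinarith [pow_pos he0 (d+1)]
  -- conclude
  intro x
  have h1 : ‖fderiv ℝ σ x‖ = ‖iteratedFDeriv ℝ 1 σ x‖ := by
    rw [← norm_iteratedFDeriv_fderiv (n := 0), norm_iteratedFDeriv_zero]
  have h2 := main (k-1) 0 (by omega) x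
  rw [h1]
  refine h2.trans ?_
  rw [Nat.sub_add_cancel hk]
end
end

section
/- For all ε ∈ [0,1), all integers k ≥ 1 and m ≥ 1, and all real exponents β_1 < β_2 < … < β_k and γ_1 < γ_2 < … < γ_m, there exists a constant C (depending only on ε and the exponents) such that the following holds. Let T > 0, let f_1, …, f_k : [0,T] → ℝ be bounded nonnegative functions, and let A_1, …, A_m ≥ 0 be constants such that Σ_{j=1}^k (R−ρ)^{β_j} f_j(ρ) ≤ ε Σ_{j=1}^k (R−ρ)^{β_j} f_j(R) + Σ_{ℓ=1}^m A_ℓ (R−ρ)^{γ_ℓ} for all 0 ≤ ρ < R ≤ T. Then Σ_{j=1}^k (R−ρ)^{β_j} f_j(ρ) ≤ C Σ_{ℓ=1}^m A_ℓ (R−ρ)^{γ_ℓ} for all 0 ≤ ρ < R ≤ T. -/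
/-- **Iteration lemma** (Lemma 3.4 of Hein–Tosatti, extending Giaquinta–Martinazzi):
if bounded nonnegative functions `f_1, …, f_k` on `[0,T]` satisfy
`Σ_j (R-ρ)^{β_j} f_j(ρ) ≤ ε Σ_j (R-ρ)^{β_j} f_j(R) + Σ_ℓ A_ℓ (R-ρ)^{γ_ℓ}` for all
`0 ≤ ρ < R ≤ T`, with `0 ≤ ε < 1`, then
`Σ_j (R-ρ)^{β_j} f_j(ρ) ≤ C Σ_ℓ A_ℓ (R-ρ)^{γ_ℓ}` for all `0 ≤ ρ < R ≤ T`, where `C`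
depends only on `ε` and the exponents. -/
theorem iteration_lemma
    (ε : ℝ) (hε0 : 0 ≤ ε) (hε1 : ε < 1)
    (k m : ℕ) (hk : 1 ≤ k) (hm : 1 ≤ m)
    (β : Fin k → ℝ) (hβ : StrictMono β)
    (γ : Fin m → ℝ) (hγ : StrictMono γ) :
    ∃ C : ℝ, 0 < C ∧
      ∀ T : ℝ, 0 < T →
      ∀ (f : Fin k → ℝ → ℝ) (A : Fin m → ℝ),
        (∀ j, ∃ M : ℝ, ∀ s ∈ Set.Icc (0 : ℝ) T, f j s ≤ M) →
        (∀ j, ∀ s ∈ Set.Icc (0 : ℝ) T, 0 ≤ f j s) →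
        (∀ ℓ, 0 ≤ A ℓ) →
        (∀ ρ R : ℝ, 0 ≤ ρ → ρ < R → R ≤ T →
          ∑ j, (R - ρ) ^ β j * f j ρ
            ≤ ε * ∑ j, (R - ρ) ^ β j * f j R + ∑ ℓ, A ℓ * (R - ρ) ^ γ ℓ) →
        ∀ ρ R : ℝ, 0 ≤ ρ → ρ < R → R ≤ T →
          ∑ j, (R - ρ) ^ β j * f j ρ ≤ C * ∑ ℓ, A ℓ * (R - ρ) ^ γ ℓ := by
  classical
  haveI : Nonempty (Fin k) := Fin.pos_iff_nonempty.mp hk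
  haveI : Nonempty (Fin m) := Fin.pos_iff_nonempty.mp hm
  have hkne : (Finset.univ : Finset (Fin k)).Nonempty := Finset.univ_nonempty
  have hmne : (Finset.univ : Finset (Fin m)).Nonempty := Finset.univ_nonempty
  set B := Finset.univ.sup' hkne β with hBdef
  set bmin := Finset.univ.inf' hkne β with hbdef
  set gmin := Finset.univ.inf' hmne γ with hgmdef
  have hβB : ∀ j, β j ≤ B := fun j => Finset.le_sup' β (Finset.mem_univ j)
  have hbβ : ∀ j, bmin ≤ β j := fun j => Finset.inf'_le β (Finset.mem_univ j)
  have hgγ : ∀ l, gmin ≤ γ l := fun l => Finset.inf'_le γ (Finset.mem_univ l)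
  set e := min bmin gmin - B with hedef
  have he0 : e ≤ 0 := by
    have h1 := hbβ ⟨0, hk⟩
    have h2 := hβB ⟨0, hk⟩
    have h3 : min bmin gmin ≤ bmin := min_le_left _ _
    rw [hedef]; linarith
  -- choose θ ∈ (0,1) with ε * θ ^ e < 1
  obtain ⟨θ, ⟨hθ0, hθ1⟩, hμlt⟩ :
      ∃ θ : ℝ, θ ∈ Set.Ioo (0:ℝ) 1 ∧ ε * θ ^ e < 1 := by
    have hcont : ContinuousAt (fun t : ℝ => ε * t ^ e) 1 :=
      continuousAt_const.mul (Real.continuousAt_rpow_const 1 e (Or.inl one_ne_zero))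
    have hlim : Filter.Tendsto (fun t : ℝ => ε * t ^ e)
        (nhdsWithin 1 (Set.Iio 1)) (nhds (ε * (1:ℝ) ^ e)) :=
      (hcont.continuousWithinAt).tendsto
    rw [Real.one_rpow, mul_one] at hlim
    have hev : ∀ᶠ t in nhdsWithin (1:ℝ) (Set.Iio 1), ε * t ^ e < 1 :=
      hlim.eventually_lt_const hε1
    have hmem : ∀ᶠ t in nhdsWithin (1:ℝ) (Set.Iio 1), t ∈ Set.Ioo (0:ℝ) 1 :=
      Filter.eventually_of_mem
        (Ioo_mem_nhdsLT_of_mem (by constructor <;> norm_num)) fun t ht => ht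
    exact (hmem.and hev).exists
  set μ := ε * θ ^ e with hμdef
  have hμ0 : 0 ≤ μ := mul_nonneg hε0 (Real.rpow_nonneg hθ0.le _)
  set lam := ε * θ ^ (-B) with hlamdef
  have hlam0 : 0 ≤ lam := mul_nonneg hε0 (Real.rpow_nonneg hθ0.le _)
  have key : ∀ x : ℝ, min bmin gmin ≤ x → lam * θ ^ x ≤ μ := by
    intro x hx
    have h1 : lam * θ ^ x = ε * θ ^ (x - B) := by
      rw [hlamdef, mul_assoc, ← Real.rpow_add hθ0, neg_add_eq_sub]
    rw [h1, hμdef]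
    exact mul_le_mul_of_nonneg_left
      (Real.rpow_le_rpow_of_exponent_ge hθ0 hθ1.le (by rw [hedef]; linarith)) hε0
  have hθB1 : ∀ x : ℝ, x ≤ B → (1:ℝ) ≤ θ ^ (-B) * θ ^ x := by
    intro x hx
    rw [← Real.rpow_add hθ0]
    exact Real.one_le_rpow_of_pos_of_le_one_of_nonpos hθ0 hθ1.le (by linarith)
  have h1θ0 : 0 < 1 - θ := by linarith
  have h1θ1 : 1 - θ ≤ 1 := by linarith
  set K := (1 - θ) ^ (-B) with hKdef
  set D := (1 - θ) ^ gmin with hDdef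
  have hK0 : 0 < K := Real.rpow_pos_of_pos h1θ0 _
  have hD0 : 0 < D := Real.rpow_pos_of_pos h1θ0 _
  have hμ1' : 0 < 1 - μ := by linarith
  refine ⟨K * D / (1 - μ), by positivity, ?_⟩
  intro T hT f A hbound hpos hA hmain ρ R hρ0 hρR hRT
  choose M hM using hbound
  have hρT : ρ ∈ Set.Icc (0:ℝ) T := ⟨hρ0, le_trans hρR.le hRT⟩
  have hM0 : ∀ j, 0 ≤ M j := fun j => le_trans (hpos j ρ hρT) (hM j ρ hρT)
  set c := (1 - θ) * (R - ρ) with hcdef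
  have hc0 : 0 < c := mul_pos h1θ0 (by linarith)
  set P : ℕ → ℝ := fun i => R - θ ^ i * (R - ρ) with hPdef
  have hP0 : P 0 = ρ := by simp [hPdef]
  have hθile : ∀ i : ℕ, θ ^ i ≤ 1 := fun i => pow_le_one₀ hθ0.le hθ1.le
  have hθipos : ∀ i : ℕ, 0 < θ ^ i := fun i => pow_pos hθ0 i
  have hPge : ∀ i, 0 ≤ P i := by
    intro i
    have h2 : θ ^ i * (R - ρ) ≤ 1 * (R - ρ) :=
      mul_le_mul_of_nonneg_right (hθile i) (by linarith)
    simp only [hPdef]; nlinarith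
  have hPlt : ∀ i, P i < R := by
    intro i
    have := mul_pos (hθipos i) (sub_pos.mpr hρR)
    simp only [hPdef]; linarith
  have hPT : ∀ i, P i ∈ Set.Icc (0:ℝ) T := fun i => ⟨hPge i, le_trans (hPlt i).le hRT⟩
  have hgap : ∀ i, P (i+1) - P i = θ ^ i * c := by
    intro i
    simp only [hPdef, hcdef, pow_succ]
    ring
  have hgap0 : ∀ i : ℕ, 0 < θ ^ i * c := fun i => mul_pos (hθipos i) hc0
  have hpowr : ∀ (i : ℕ) (x : ℝ), ((θ ^ i : ℝ)) ^ x = (θ ^ x) ^ i := by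
    intro i x
    rw [← Real.rpow_natCast θ i, ← Real.rpow_mul hθ0.le, mul_comm,
      Real.rpow_mul hθ0.le, Real.rpow_natCast]
  have hsplit : ∀ (i : ℕ) (x : ℝ), (θ ^ i * c) ^ x = (θ ^ x) ^ i * c ^ x := by
    intro i x
    rw [Real.mul_rpow (hθipos i).le hc0.le, hpowr]
  set g : ℕ → ℝ := fun i => ∑ j, (θ ^ i * c) ^ β j * f j (P i) with hgdef
  set q : ℕ → ℝ := fun i => ∑ l, A l * (θ ^ i * c) ^ γ l with hqdef
  have hstep : ∀ i, g i ≤ lam * g (i+1) + q i := by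
    intro i
    have hmain' := hmain (P i) (P (i+1)) (hPge i)
      (by nlinarith [hgap i, hgap0 i]) (le_trans (hPlt (i+1)).le hRT)
    rw [hgap i] at hmain'
    refine le_trans hmain' (add_le_add ?_ le_rfl)
    have hterm : ∀ j, (θ ^ i * c) ^ β j * f j (P (i+1))
        ≤ θ ^ (-B) * ((θ ^ (i+1) * c) ^ β j * f j (P (i+1))) := by
      intro j
      have hf := hpos j _ (hPT (i+1))
      have h1 : (θ ^ (i+1) * c) ^ β j = θ ^ β j * (θ ^ i * c) ^ β j := by
        rw [hsplit, hsplit, pow_succ]; ring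
      rw [h1]
      have h2 := hθB1 (β j) (hβB j)
      calc (θ ^ i * c) ^ β j * f j (P (i+1))
          = 1 * ((θ ^ i * c) ^ β j * f j (P (i+1))) := by ring
        _ ≤ (θ ^ (-B) * θ ^ β j) * ((θ ^ i * c) ^ β j * f j (P (i+1))) :=
            mul_le_mul_of_nonneg_right h2
              (mul_nonneg (Real.rpow_nonneg (hgap0 i).le _) hf)
        _ = θ ^ (-B) * (θ ^ β j * (θ ^ i * c) ^ β j * f j (P (i+1))) := by ring
    calc ε * ∑ j, (θ ^ i * c) ^ β j * f j (P (i+1))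
        ≤ ε * (θ ^ (-B) * ∑ j, (θ ^ (i+1) * c) ^ β j * f j (P (i+1))) := by
          refine mul_le_mul_of_nonneg_left ?_ hε0
          rw [Finset.mul_sum]
          exact Finset.sum_le_sum fun j _ => hterm j
      _ = lam * g (i+1) := by rw [hlamdef, hgdef]; ring
  have hiter : ∀ N : ℕ, g 0 ≤ lam ^ N * g N + ∑ i ∈ Finset.range N, lam ^ i * q i := by
    intro N
    induction N with
    | zero => simp
    | succ N ih =>
      have h1 : lam ^ N * g N ≤ lam ^ N * (lam * g (N+1) + q N) :=
        mul_le_mul_of_nonneg_left (hstep N) (pow_nonneg hlam0 N)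
      have h2 : lam ^ N * (lam * g (N+1) + q N)
          = lam ^ (N+1) * g (N+1) + lam ^ N * q N := by ring
      rw [Finset.sum_range_succ]
      linarith
  set Bsum := ∑ j, c ^ β j * M j with hBsumdef
  have hBsum0 : 0 ≤ Bsum :=
    Finset.sum_nonneg fun j _ => mul_nonneg (Real.rpow_nonneg hc0.le _) (hM0 j)
  have htail : ∀ N, lam ^ N * g N ≤ μ ^ N * Bsum := by
    intro N
    rw [hgdef, hBsumdef, Finset.mul_sum, Finset.mul_sum]
    refine Finset.sum_le_sum fun j _ => ?_
    have h1 : lam ^ N * ((θ ^ N * c) ^ β j * f j (P N))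
        ≤ lam ^ N * ((θ ^ N * c) ^ β j * M j) :=
      mul_le_mul_of_nonneg_left
        (mul_le_mul_of_nonneg_left (hM j _ (hPT N)) (Real.rpow_nonneg (hgap0 N).le _))
        (pow_nonneg hlam0 N)
    refine le_trans h1 ?_
    rw [hsplit]
    have h2 : lam ^ N * ((θ ^ β j) ^ N * c ^ β j * M j)
        = (lam * θ ^ β j) ^ N * (c ^ β j * M j) := by rw [mul_pow]; ring
    rw [h2]
    have h3 : (lam * θ ^ β j) ^ N ≤ μ ^ N :=
      pow_le_pow_left₀ (mul_nonneg hlam0 (Real.rpow_nonneg hθ0.le _))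
        (key _ (le_trans (min_le_left _ _) (hbβ j))) N
    exact mul_le_mul_of_nonneg_right h3
      (mul_nonneg (Real.rpow_nonneg hc0.le _) (hM0 j))
  set H := ∑ l, A l * c ^ γ l with hHdef
  have hH0 : 0 ≤ H :=
    Finset.sum_nonneg fun l _ => mul_nonneg (hA l) (Real.rpow_nonneg hc0.le _)
  have hqb : ∀ i, lam ^ i * q i ≤ μ ^ i * H := by
    intro i
    rw [hqdef, hHdef, Finset.mul_sum, Finset.mul_sum]
    refine Finset.sum_le_sum fun l _ => ?_
    rw [hsplit]
    have h2 : lam ^ i * (A l * ((θ ^ γ l) ^ i * c ^ γ l))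
        = (lam * θ ^ γ l) ^ i * (A l * c ^ γ l) := by rw [mul_pow]; ring
    rw [h2]
    exact mul_le_mul_of_nonneg_right
      (pow_le_pow_left₀ (mul_nonneg hlam0 (Real.rpow_nonneg hθ0.le _))
        (key _ (le_trans (min_le_right _ _) (hgγ l))) i)
      (mul_nonneg (hA l) (Real.rpow_nonneg hc0.le _))
  have hgeom : ∀ N, ∑ i ∈ Finset.range N, μ ^ i ≤ (1 - μ)⁻¹ := by
    intro N
    rw [geom_sum_eq (by linarith : μ ≠ 1)]
    rw [div_le_iff_of_neg (by linarith : μ - 1 < 0)]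
    have h1 : (1 - μ)⁻¹ * (μ - 1) = -1 := by field_simp; ring
    rw [h1]
    have := pow_nonneg hμ0 N
    linarith
  have hfin : g 0 ≤ H * (1 - μ)⁻¹ := by
    have hten : Filter.Tendsto (fun N : ℕ => μ ^ N * Bsum + H * (1 - μ)⁻¹)
        Filter.atTop (nhds (0 * Bsum + H * (1 - μ)⁻¹)) :=
      ((tendsto_pow_atTop_nhds_zero_of_lt_one hμ0 hμlt).mul_const Bsum).add_const _
    rw [zero_mul, zero_add] at hten
    refine ge_of_tendsto' hten fun N => ?_
    calc g 0 ≤ lam ^ N * g N + ∑ i ∈ Finset.range N, lam ^ i * q i := hiter N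
      _ ≤ μ ^ N * Bsum + ∑ i ∈ Finset.range N, μ ^ i * H :=
          add_le_add (htail N) (Finset.sum_le_sum fun i _ => hqb i)
      _ ≤ μ ^ N * Bsum + H * (1 - μ)⁻¹ := by
          have h1 : ∑ i ∈ Finset.range N, μ ^ i * H
              = (∑ i ∈ Finset.range N, μ ^ i) * H := by rw [Finset.sum_mul]
          have h2 := mul_le_mul_of_nonneg_right (hgeom N) hH0
          rw [h1]
          linarith [h2, mul_comm ((1 - μ)⁻¹) H]
  have hHle : H ≤ D * ∑ l, A l * (R - ρ) ^ γ l := by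
    rw [hHdef, Finset.mul_sum]
    refine Finset.sum_le_sum fun l _ => ?_
    have h1 : c ^ γ l = (1 - θ) ^ γ l * (R - ρ) ^ γ l := by
      rw [hcdef]; exact Real.mul_rpow h1θ0.le (by linarith)
    rw [h1]
    have h2 : (1 - θ) ^ γ l ≤ D :=
      Real.rpow_le_rpow_of_exponent_ge h1θ0 h1θ1 (hgγ l)
    have h3 : (0:ℝ) ≤ (R - ρ) ^ γ l := Real.rpow_nonneg (by linarith) _
    calc A l * ((1 - θ) ^ γ l * (R - ρ) ^ γ l)
        ≤ A l * (D * (R - ρ) ^ γ l) :=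
          mul_le_mul_of_nonneg_left (mul_le_mul_of_nonneg_right h2 h3) (hA l)
      _ = D * (A l * (R - ρ) ^ γ l) := by ring
  have hLK : ∑ j, (R - ρ) ^ β j * f j ρ ≤ K * g 0 := by
    rw [hgdef, Finset.mul_sum]
    refine Finset.sum_le_sum fun j _ => ?_
    rw [hP0, pow_zero, one_mul]
    have h1 : c ^ β j = (1 - θ) ^ β j * (R - ρ) ^ β j := by
      rw [hcdef]; exact Real.mul_rpow h1θ0.le (by linarith)
    have h2 : (R - ρ) ^ β j = (1 - θ) ^ (-β j) * c ^ β j := by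
      rw [h1, ← mul_assoc, ← Real.rpow_add h1θ0, neg_add_cancel, Real.rpow_zero, one_mul]
    rw [h2]
    have h3 : (1 - θ) ^ (-β j) ≤ K :=
      Real.rpow_le_rpow_of_exponent_ge h1θ0 h1θ1 (by linarith [hβB j])
    have h4 : 0 ≤ c ^ β j * f j ρ :=
      mul_nonneg (Real.rpow_nonneg hc0.le _) (hpos j ρ hρT)
    calc (1 - θ) ^ (-β j) * c ^ β j * f j ρ
        = (1 - θ) ^ (-β j) * (c ^ β j * f j ρ) := by ring
      _ ≤ K * (c ^ β j * f j ρ) := mul_le_mul_of_nonneg_right h3 h4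
  calc ∑ j, (R - ρ) ^ β j * f j ρ ≤ K * g 0 := hLK
    _ ≤ K * (H * (1 - μ)⁻¹) := mul_le_mul_of_nonneg_left hfin hK0.le
    _ ≤ K * ((D * ∑ l, A l * (R - ρ) ^ γ l) * (1 - μ)⁻¹) :=
        mul_le_mul_of_nonneg_left
          (mul_le_mul_of_nonneg_right hHle (inv_nonneg.mpr hμ1'.le)) hK0.le
    _ = K * D / (1 - μ) * ∑ l, A l * (R - ρ) ^ γ l := by
        field_simp
end

section
/- For all integers d ≥ 0, e ≥ 1, N ≥ 1, k ≥ 1 and all α ∈ (0,1) there exists a constant C_k = C_k(d,e,N,k,α), independent of the center and of the radii, such that the following holds. For every p ∈ ℝ^{d+e}, all radii 0 < ρ < R, and every ℤ^e-periodic map σ : B_q(p,2R) → ℝ^N of class C^{k,α}_loc, one has Σ_{j=1}^k (R−ρ)^j sup_{B_q(p,ρ)} ‖D^j σ‖ ≤ C_k ( (R−ρ)^{k+α} [D^k σ]_{C^α(B_q(p,R))} + sup_{B_q(p,R)} ‖σ‖ ). (Interpolation inequality on geodesic balls of arbitrary radius of the flat cylinder ℝ^d × T^e, with constant independent of the radius.)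 -/
noncomputable section

/-- Translation by the lattice vector `(0, v)` of `ℝ^d × ℝ^e`, `v ∈ ℤ^e`. -/
def latv (d e : ℕ) (v : Fin e → ℤ) : (Fin d ⊕ Fin e) → ℝ :=
  Sum.elim (fun _ => 0) (fun b => (v b : ℝ))

/-- The lift to `ℝ^{d+e}` of the geodesic ball of radius `r` centered at `p` of the
flat cylinder `ℝ^d × T^e`. -/
def Bq (d e : ℕ) (p : (Fin d ⊕ Fin e) → ℝ) (r : ℝ) : Set ((Fin d ⊕ Fin e) → ℝ) :=
  {x | ∃ v : Fin e → ℤ, eunorm (x - p - latv d e v) < r}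

open Set

section helpers
variable {E : Type} [NormedAddCommGroup E] [NormedSpace ℝ E]

def Sdiff {F : Type} [AddCommGroup F] (h : ℝ) : (m : ℕ) → (Fin m → E) → (E → F) → (E → F)
  | 0, _, f => f
  | m+1, u, f => fun y =>
      Sdiff h m (u ∘ Fin.castSucc) f (y + h • u (Fin.last m)) -
        Sdiff h m (u ∘ Fin.castSucc) f y

theorem snoc_box {m : ℕ} {h : ℝ} (hh : 0 ≤ h) (s : ℝ) (hs : s ∈ Set.Icc 0 h)
    (c : Fin m → ℝ) (hc : ∀ i, c i ∈ Set.Icc (0:ℝ) h) :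
    ∀ i, (Fin.snoc c s : Fin (m+1) → ℝ) i ∈ Set.Icc (0:ℝ) h := by
  intro i
  refine Fin.lastCases ?_ ?_ i
  · simpa [Fin.snoc_last] using hs
  · intro i; simpa [Fin.snoc_castSucc] using hc i

theorem snoc_pt {m : ℕ} (u : Fin (m+1) → E) (s : ℝ) (c : Fin m → ℝ) (y : E) :
    y + ∑ i, (Fin.snoc c s : Fin (m+1) → ℝ) i • u i
      = (y + s • u (Fin.last m)) + ∑ i, c i • (u ∘ Fin.castSucc) i := by
  rw [Fin.sum_univ_castSucc]
  simp only [Fin.snoc_castSucc, Fin.snoc_last, Function.comp]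
  abel

theorem Sdiff_norm_le {F : Type} [NormedAddCommGroup F] (h : ℝ) (hh : 0 ≤ h) (m : ℕ) :
    ∀ (u : Fin m → E) (f : E → F) (M : ℝ) (y : E),
      (∀ c : Fin m → ℝ, (∀ i, c i ∈ Set.Icc 0 h) → ‖f (y + ∑ i, c i • u i)‖ ≤ M) →
      ‖Sdiff h m u f y‖ ≤ 2 ^ m * M := by
  induction m with
  | zero =>
    intro u f M y hb
    have := hb (fun _ => 0) (fun i => i.elim0)
    simpa [Sdiff] using this
  | succ m IH =>
    intro u f M y hb
    have hb1 : ∀ c : Fin m → ℝ, (∀ i, c i ∈ Set.Icc 0 h) →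
        ‖f (y + h • u (Fin.last m) + ∑ i, c i • (u ∘ Fin.castSucc) i)‖ ≤ M := by
      intro c hc
      have hmem : ∀ i, (Fin.snoc c h : Fin (m+1) → ℝ) i ∈ Set.Icc (0:ℝ) h := by
        intro i
        refine Fin.lastCases ?_ ?_ i
        · simp [Fin.snoc_last]; exact hh
        · intro i; simpa [Fin.snoc_castSucc] using hc i
      have := hb (Fin.snoc c h) hmem
      have hpt : y + ∑ i, (Fin.snoc c h : Fin (m+1) → ℝ) i • u i
          = y + h • u (Fin.last m) + ∑ i, c i • (u ∘ Fin.castSucc) i := by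
        rw [Fin.sum_univ_castSucc]
        simp only [Fin.snoc_castSucc, Fin.snoc_last, Function.comp]
        abel
      rwa [hpt] at this
    have hb2 : ∀ c : Fin m → ℝ, (∀ i, c i ∈ Set.Icc 0 h) →
        ‖f (y + ∑ i, c i • (u ∘ Fin.castSucc) i)‖ ≤ M := by
      intro c hc
      have hmem : ∀ i, (Fin.snoc c 0 : Fin (m+1) → ℝ) i ∈ Set.Icc (0:ℝ) h := by
        intro i
        refine Fin.lastCases ?_ ?_ i
        · simp [Fin.snoc_last, le_refl, hh]
        · intro i; simpa [Fin.snoc_castSucc] using hc i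
      have := hb (Fin.snoc c 0) hmem
      have hpt : y + ∑ i, (Fin.snoc c 0 : Fin (m+1) → ℝ) i • u i
          = y + ∑ i, c i • (u ∘ Fin.castSucc) i := by
        rw [Fin.sum_univ_castSucc]
        simp only [Fin.snoc_castSucc, Fin.snoc_last, Function.comp, zero_smul, add_zero]
      rwa [hpt] at this
    have h1 := IH (u ∘ Fin.castSucc) f M (y + h • u (Fin.last m)) hb1
    have h2 := IH (u ∘ Fin.castSucc) f M y hb2
    calc ‖Sdiff h (m+1) u f y‖
        ≤ ‖Sdiff h m (u ∘ Fin.castSucc) f (y + h • u (Fin.last m))‖ +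
          ‖Sdiff h m (u ∘ Fin.castSucc) f y‖ := norm_sub_le _ _
      _ ≤ 2 ^ m * M + 2 ^ m * M := add_le_add h1 h2
      _ = 2 ^ (m+1) * M := by ring


theorem Sdiff_hasFDerivAt {F : Type} [NormedAddCommGroup F] [NormedSpace ℝ F]
    (h : ℝ) (hh : 0 ≤ h) (m : ℕ) :
    ∀ (u : Fin m → E) (f : E → F) (f' : E → E →L[ℝ] F) (U : Set E),
      (∀ z ∈ U, HasFDerivAt f (f' z) z) →
      ∀ (y : E), (∀ c : Fin m → ℝ, (∀ i, c i ∈ Set.Icc 0 h) → y + ∑ i, c i • u i ∈ U) →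
      HasFDerivAt (Sdiff h m u f) (Sdiff h m u f' y) y := by
  induction m with
  | zero =>
    intro u f f' U hfd y hbox
    have hy : y ∈ U := by simpa using hbox (fun _ => 0) (fun i => i.elim0)
    exact hfd y hy
  | succ m IH =>
    intro u f f' U hfd y hbox
    have hbox1 : ∀ c : Fin m → ℝ, (∀ i, c i ∈ Set.Icc 0 h) →
        (y + h • u (Fin.last m)) + ∑ i, c i • (u ∘ Fin.castSucc) i ∈ U := by
      intro c hc
      have := hbox (Fin.snoc c h) (snoc_box hh h ⟨hh, le_refl h⟩ c hc)
      rwa [snoc_pt] at this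
    have hbox2 : ∀ c : Fin m → ℝ, (∀ i, c i ∈ Set.Icc 0 h) →
        y + ∑ i, c i • (u ∘ Fin.castSucc) i ∈ U := by
      intro c hc
      have := hbox (Fin.snoc c 0) (snoc_box hh 0 ⟨le_refl 0, hh⟩ c hc)
      rw [snoc_pt] at this
      simpa using this
    have h1 : HasFDerivAt (fun z => Sdiff h m (u ∘ Fin.castSucc) f (z + h • u (Fin.last m)))
        (Sdiff h m (u ∘ Fin.castSucc) f' (y + h • u (Fin.last m))) y := by
      have hIH := IH (u ∘ Fin.castSucc) f f' U hfd (y + h • u (Fin.last m)) hbox1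
      have ht : HasFDerivAt (fun z : E => z + h • u (Fin.last m))
          (ContinuousLinearMap.id ℝ E) y := (hasFDerivAt_id y).add_const _
      have := hIH.comp y ht
      exact this
    have h2 := IH (u ∘ Fin.castSucc) f f' U hfd y hbox2
    exact h1.sub h2


theorem Sdiff_key (j : ℕ) :
    ∀ {F : Type} [NormedAddCommGroup F] [NormedSpace ℝ F] (f : E → F) (U : Set E),
      IsOpen U → ContDiffOn ℝ j f U →
      ∀ (h : ℝ), 0 ≤ h → ∀ (u : Fin j → E) (ω : ℝ),
      (∀ z ∈ U, ∀ z' ∈ U, ‖iteratedFDeriv ℝ j f z - iteratedFDeriv ℝ j f z'‖ ≤ ω) →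
      ∀ (y : E), (∀ c : Fin j → ℝ, (∀ i, c i ∈ Set.Icc 0 h) → y + ∑ i, c i • u i ∈ U) →
      ‖Sdiff h j u f y - h ^ j • iteratedFDeriv ℝ j f y u‖
        ≤ 4 ^ j * h ^ j * (∏ i, ‖u i‖) * ω := by
  induction j with
  | zero =>
    intro F _ _ f U hU hf h hh u ω hω y hbox
    have hy : y ∈ U := by simpa using hbox (fun _ => 0) (fun i => i.elim0)
    have hω0 : 0 ≤ ω := le_trans (norm_nonneg _) (hω y hy y hy)
    have : Sdiff h 0 u f y - h ^ 0 • iteratedFDeriv ℝ 0 f y u = 0 := by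
      simp [Sdiff, iteratedFDeriv_zero_apply]
    rw [this]
    simp [hω0]
  | succ n IH =>
    intro F _ _ f U hU hf h hh u ω hω y hbox
    set f' : E → (E →L[ℝ] F) := fderiv ℝ f with hf'def
    set u' : Fin n → E := u ∘ Fin.castSucc with hu'def
    set a : E := u (Fin.last n) with hadef
    have hy : y ∈ U := by simpa using hbox (fun _ => 0) (fun i => ⟨le_refl 0, hh⟩)
    have hω0 : 0 ≤ ω := le_trans (norm_nonneg _) (hω y hy y hy)
    have hf' : ContDiffOn ℝ n f' U := hf.fderiv_of_isOpen hU (by norm_cast)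
    have hfd : ∀ z ∈ U, HasFDerivAt f (f' z) z := by
      intro z hz
      have hd : DifferentiableOn ℝ f U := hf.differentiableOn (by simp)
      exact ((hd z hz).differentiableAt (hU.mem_nhds hz)).hasFDerivAt
    have hω' : ∀ z ∈ U, ∀ z' ∈ U,
        ‖iteratedFDeriv ℝ n f' z - iteratedFDeriv ℝ n f' z'‖ ≤ ω := by
      intro z hz z' hz'
      have h0 := hω z hz z' hz'
      rw [iteratedFDeriv_succ_eq_comp_right, iteratedFDeriv_succ_eq_comp_right,
        Function.comp_apply, Function.comp_apply, ← LinearIsometryEquiv.map_sub,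
        LinearIsometryEquiv.norm_map] at h0
      exact h0
    -- box lifting along the segment in direction `a`
    have hboxlift : ∀ s : ℝ, s ∈ Set.Icc 0 h →
        ∀ c : Fin n → ℝ, (∀ i, c i ∈ Set.Icc 0 h) → (y + s • a) + ∑ i, c i • u' i ∈ U := by
      intro s hs c hc
      have := hbox (Fin.snoc c s) (snoc_box hh s hs c hc)
      rwa [snoc_pt] at this
    have hboxy : ∀ c : Fin n → ℝ, (∀ i, c i ∈ Set.Icc 0 h) → y + ∑ i, c i • u' i ∈ U := by
      intro c hc
      have := hboxlift 0 ⟨le_refl 0, hh⟩ c hc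
      simpa using this
    have hmemU : ∀ s : ℝ, s ∈ Set.Icc 0 h → y + s • a ∈ U := by
      intro s hs
      have := hboxlift s hs (fun _ => 0) (fun i => ⟨le_refl 0, hh⟩)
      simpa using this
    -- IH along the segment
    have hIH : ∀ s : ℝ, s ∈ Set.Icc 0 h →
        ‖Sdiff h n u' f' (y + s • a) - h ^ n • iteratedFDeriv ℝ n f' (y + s • a) u'‖
          ≤ 4 ^ n * h ^ n * (∏ i, ‖u' i‖) * ω := by
      intro s hs
      exact IH f' U hU hf' h hh u' ω hω' (y + s • a) (hboxlift s hs)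
    have hIHy : ‖Sdiff h n u' f' y - h ^ n • iteratedFDeriv ℝ n f' y u'‖
        ≤ 4 ^ n * h ^ n * (∏ i, ‖u' i‖) * ω := by
      have := hIH 0 ⟨le_refl 0, hh⟩
      simpa using this
    have hprod0 : (0:ℝ) ≤ ∏ i, ‖u' i‖ := Finset.prod_nonneg (fun i _ => norm_nonneg _)
    have hpow0 : (0:ℝ) ≤ h ^ n := pow_nonneg hh n
    -- oscillation bound for `Sdiff h n u' f'`
    have hdb : ∀ s : ℝ, s ∈ Set.Icc 0 h →
        ‖Sdiff h n u' f' (y + s • a) - Sdiff h n u' f' y‖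
          ≤ 3 * 4 ^ n * h ^ n * (∏ i, ‖u' i‖) * ω := by
      intro s hs
      have h1 := hIH s hs
      have h3 : ‖iteratedFDeriv ℝ n f' (y + s • a) u' - iteratedFDeriv ℝ n f' y u'‖
          ≤ ω * ∏ i, ‖u' i‖ := by
        have e1 : iteratedFDeriv ℝ n f' (y + s • a) u' - iteratedFDeriv ℝ n f' y u'
            = (iteratedFDeriv ℝ n f' (y + s • a) - iteratedFDeriv ℝ n f' y) u' := by
          simp [ContinuousMultilinearMap.sub_apply]
        rw [e1]
        calc ‖(iteratedFDeriv ℝ n f' (y + s • a) - iteratedFDeriv ℝ n f' y) u'‖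
            ≤ ‖iteratedFDeriv ℝ n f' (y + s • a) - iteratedFDeriv ℝ n f' y‖ * ∏ i, ‖u' i‖ :=
              ContinuousMultilinearMap.le_opNorm _ _
          _ ≤ ω * ∏ i, ‖u' i‖ :=
              mul_le_mul_of_nonneg_right (hω' _ (hmemU s hs) _ hy) hprod0
      have decomp : Sdiff h n u' f' (y + s • a) - Sdiff h n u' f' y
          = (Sdiff h n u' f' (y + s • a) - h ^ n • iteratedFDeriv ℝ n f' (y + s • a) u')
            - (Sdiff h n u' f' y - h ^ n • iteratedFDeriv ℝ n f' y u')
            + h ^ n • (iteratedFDeriv ℝ n f' (y + s • a) u' - iteratedFDeriv ℝ n f' y u') := by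
        simp only [smul_sub]; abel
      have hsmul : ‖h ^ n • (iteratedFDeriv ℝ n f' (y + s • a) u' - iteratedFDeriv ℝ n f' y u')‖
          ≤ h ^ n * (ω * ∏ i, ‖u' i‖) := by
        refine (norm_smul_le (h ^ n) (iteratedFDeriv ℝ n f' (y + s • a) u' - iteratedFDeriv ℝ n f' y u')).trans ?_
        rw [Real.norm_of_nonneg hpow0]
        exact mul_le_mul_of_nonneg_left h3 hpow0
      have h4 : (1:ℝ) ≤ 4 ^ n := one_le_pow₀ (by norm_num)
      calc ‖Sdiff h n u' f' (y + s • a) - Sdiff h n u' f' y‖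
          = ‖(Sdiff h n u' f' (y + s • a) - h ^ n • iteratedFDeriv ℝ n f' (y + s • a) u')
            - (Sdiff h n u' f' y - h ^ n • iteratedFDeriv ℝ n f' y u')
            + h ^ n • (iteratedFDeriv ℝ n f' (y + s • a) u' - iteratedFDeriv ℝ n f' y u')‖ := by
              rw [decomp]
        _ ≤ ‖(Sdiff h n u' f' (y + s • a) - h ^ n • iteratedFDeriv ℝ n f' (y + s • a) u')
            - (Sdiff h n u' f' y - h ^ n • iteratedFDeriv ℝ n f' y u')‖
            + h ^ n * (ω * ∏ i, ‖u' i‖) := (norm_add_le _ _).trans (add_le_add (le_refl _) hsmul)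
        _ ≤ (‖Sdiff h n u' f' (y + s • a) - h ^ n • iteratedFDeriv ℝ n f' (y + s • a) u'‖
            + ‖Sdiff h n u' f' y - h ^ n • iteratedFDeriv ℝ n f' y u'‖)
            + h ^ n * (ω * ∏ i, ‖u' i‖) := add_le_add (norm_sub_le _ _) (le_refl _)
        _ ≤ (4 ^ n * h ^ n * (∏ i, ‖u' i‖) * ω + 4 ^ n * h ^ n * (∏ i, ‖u' i‖) * ω)
            + h ^ n * (ω * ∏ i, ‖u' i‖) := add_le_add (add_le_add h1 hIHy) (le_refl _)
        _ ≤ 3 * 4 ^ n * h ^ n * (∏ i, ‖u' i‖) * ω := by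
            nlinarith [mul_nonneg (mul_nonneg hpow0 hprod0) hω0]
    -- mean value inequality on the segment
    have hseg : ∀ z ∈ segment ℝ y (y + h • a), ∃ s, s ∈ Set.Icc (0:ℝ) h ∧ z = y + s • a := by
      intro z hz
      rw [segment_eq_image'] at hz
      obtain ⟨t, ht, rfl⟩ := hz
      refine ⟨t * h, ⟨mul_nonneg ht.1 hh, ?_⟩, by simp only [add_sub_cancel_left, smul_smul]⟩
      calc t * h ≤ 1 * h := mul_le_mul_of_nonneg_right ht.2 hh
        _ = h := one_mul h
    set G := Sdiff h n u' f with hGdef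
    set φ : E →L[ℝ] F := Sdiff h n u' f' y with hφdef
    have hMVT : ‖G (y + h • a) - G y - φ ((y + h • a) - y)‖
        ≤ (3 * 4 ^ n * h ^ n * (∏ i, ‖u' i‖) * ω) * ‖(y + h • a) - y‖ := by
      apply Convex.norm_image_sub_le_of_norm_hasFDerivWithin_le'
        (f' := fun z => Sdiff h n u' f' z) (φ := φ)
        (fun z hz => ?_) (fun z hz => ?_) (convex_segment _ _)
        (left_mem_segment ℝ y (y + h • a)) (right_mem_segment ℝ y (y + h • a))
      · obtain ⟨s, hs, rfl⟩ := hseg z hz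
        exact (Sdiff_hasFDerivAt h hh n u' f f' U hfd (y + s • a)
          (hboxlift s hs)).hasFDerivWithinAt
      · obtain ⟨s, hs, rfl⟩ := hseg z hz
        exact hdb s hs
    set B : E →L[ℝ] F := h ^ n • iteratedFDeriv ℝ n f' y u' with hBdef
    have hsub : (y + h • a) - y = h • a := add_sub_cancel_left y (h • a)
    have hna : ‖(y + h • a) - y‖ = h * ‖a‖ := by
      rw [hsub, norm_smul, Real.norm_of_nonneg hh]
    have hGdiff : Sdiff h (n+1) u f y = G (y + h • a) - G y := rfl
    have happly : iteratedFDeriv ℝ (n+1) f y u = (iteratedFDeriv ℝ n f' y u') a :=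
      iteratedFDeriv_succ_apply_right u
    have hterm2 : ‖φ (h • a) - h ^ (n+1) • iteratedFDeriv ℝ (n+1) f y u‖
        ≤ h * ((4 ^ n * h ^ n * (∏ i, ‖u' i‖) * ω) * ‖a‖) := by
      have e1 : φ (h • a) = h • φ a := map_smul φ h a
      have e2 : h ^ (n+1) • iteratedFDeriv ℝ (n+1) f y u = h • (B a) := by
        rw [happly, hBdef, ContinuousLinearMap.smul_apply, smul_smul, ← pow_succ']
      rw [e1, e2, ← smul_sub]
      refine (norm_smul_le h (φ a - B a)).trans ?_
      rw [Real.norm_of_nonneg hh]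
      refine mul_le_mul_of_nonneg_left ?_ hh
      have hsubapp : φ a - B a = (φ - B) a := (ContinuousLinearMap.sub_apply φ B a).symm
      rw [hsubapp]
      calc ‖(φ - B) a‖ ≤ ‖φ - B‖ * ‖a‖ := ContinuousLinearMap.le_opNorm _ _
        _ ≤ (4 ^ n * h ^ n * (∏ i, ‖u' i‖) * ω) * ‖a‖ :=
            mul_le_mul_of_nonneg_right hIHy (norm_nonneg a)
    have hterm1 : ‖G (y + h • a) - G y - φ (h • a)‖
        ≤ (3 * 4 ^ n * h ^ n * (∏ i, ‖u' i‖) * ω) * (h * ‖a‖) := by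
      have := hMVT
      rwa [hsub, norm_smul, Real.norm_of_nonneg hh] at this
    have hprodsplit : (∏ i : Fin (n+1), ‖u i‖) = (∏ i, ‖u' i‖) * ‖a‖ := by
      rw [Fin.prod_univ_castSucc]; rfl
    calc ‖Sdiff h (n+1) u f y - h ^ (n+1) • iteratedFDeriv ℝ (n+1) f y u‖
        = ‖(G (y + h • a) - G y - φ (h • a))
            + (φ (h • a) - h ^ (n+1) • iteratedFDeriv ℝ (n+1) f y u)‖ := by
          rw [hGdiff, sub_add_sub_cancel]
      _ ≤ ‖G (y + h • a) - G y - φ (h • a)‖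
            + ‖φ (h • a) - h ^ (n+1) • iteratedFDeriv ℝ (n+1) f y u‖ := norm_add_le _ _
      _ ≤ (3 * 4 ^ n * h ^ n * (∏ i, ‖u' i‖) * ω) * (h * ‖a‖)
            + h * ((4 ^ n * h ^ n * (∏ i, ‖u' i‖) * ω) * ‖a‖) := add_le_add hterm1 hterm2
      _ = 4 ^ (n+1) * h ^ (n+1) * ((∏ i, ‖u' i‖) * ‖a‖) * ω := by ring
      _ = 4 ^ (n+1) * h ^ (n+1) * (∏ i : Fin (n+1), ‖u i‖) * ω := by rw [hprodsplit]

section eunorm_lemmas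
variable {ι : Type} [Fintype ι] [DecidableEq ι]

/-- The identity as a continuous linear equiv to the `L²` space. -/
def toL2 : ((i : ι) → ℝ) ≃L[ℝ] EuclideanSpace ℝ ι :=
  (PiLp.continuousLinearEquiv 2 ℝ (fun _ : ι => ℝ)).symm

theorem eunorm_eq (x : ι → ℝ) : eunorm x = ‖toL2 x‖ := by
  rw [EuclideanSpace.norm_eq]
  rfl

theorem eunorm_nonneg (x : ι → ℝ) : 0 ≤ eunorm x := Real.sqrt_nonneg _

theorem eunorm_sub_le (a b : ι → ℝ) : eunorm (a - b) ≤ eunorm a + eunorm b := by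
  rw [eunorm_eq, eunorm_eq, eunorm_eq, map_sub]
  exact norm_sub_le _ _

theorem eunorm_add_le (a b : ι → ℝ) : eunorm (a + b) ≤ eunorm a + eunorm b := by
  rw [eunorm_eq, eunorm_eq, eunorm_eq, map_add]
  exact norm_add_le _ _

theorem eunorm_smul_le (c : ℝ) (x : ι → ℝ) : eunorm (c • x) ≤ |c| * eunorm x := by
  rw [eunorm_eq, eunorm_eq, map_smul]
  simpa using norm_smul_le c (toL2 x)

theorem eunorm_sum_le {m : ℕ} (v : Fin m → (ι → ℝ)) :
    eunorm (∑ i, v i) ≤ ∑ i, eunorm (v i) := by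
  simp only [eunorm_eq, map_sum]
  exact norm_sum_le _ _

theorem eunorm_single (b : ι) : eunorm (Pi.single b (1:ℝ) : (i : ι) → ℝ) = 1 := by
  have : ∀ i : ι, ‖(Pi.single b (1:ℝ) : (i : ι) → ℝ) i‖ ^ 2 = if i = b then (1:ℝ) else 0 := by
    intro i
    by_cases h : i = b <;> simp [Pi.single_apply, h]
  unfold eunorm
  calc Real.sqrt (∑ i, ‖(Pi.single b (1:ℝ) : (i : ι) → ℝ) i‖ ^ 2)
      = Real.sqrt (∑ i, if i = b then (1:ℝ) else 0) := by
        congr 1; exact Finset.sum_congr rfl fun i _ => this i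
    _ = 1 := by rw [Finset.sum_ite_eq' Finset.univ b (fun _ => (1:ℝ))]; simp

theorem norm_le_eunorm (x : ι → ℝ) : ‖x‖ ≤ eunorm x := by
  rw [pi_norm_le_iff_of_nonneg (eunorm_nonneg x)]
  intro i
  have h1 : ‖x i‖ = Real.sqrt (‖x i‖ ^ 2) := by
    rw [Real.sqrt_sq_eq_abs, abs_norm]
  rw [h1]
  apply Real.sqrt_le_sqrt
  exact Finset.single_le_sum (fun j _ => sq_nonneg ‖x j‖) (Finset.mem_univ i)

theorem eball_eq (x : ι → ℝ) (s : ℝ) :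
    {z : ι → ℝ | eunorm (z - x) < s} = ⇑toL2 ⁻¹' Metric.ball (toL2 x) s := by
  ext z
  simp only [mem_setOf_eq, mem_preimage, Metric.mem_ball, dist_eq_norm, ← map_sub, eunorm_eq]

theorem isOpen_eball (x : ι → ℝ) (s : ℝ) : IsOpen {z : ι → ℝ | eunorm (z - x) < s} := by
  rw [eball_eq]
  exact Metric.isOpen_ball.preimage toL2.continuous

theorem convex_eunorm_ball (x : ι → ℝ) (s : ℝ) : Convex ℝ {z : ι → ℝ | eunorm (z - x) < s} := by
  intro z hz z' hz' a b ha hb hab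
  simp only [mem_setOf_eq] at hz hz' ⊢
  have h1 : a • z + b • z' - x = a • (z - x) + b • (z' - x) := by
    have h2 : a • (z - x) + b • (z' - x) = a • z + b • z' - (a + b) • x := by
      rw [smul_sub, smul_sub, add_smul]; abel
    rw [h2, hab, one_smul]
  rw [h1]
  have h3 : eunorm (a • (z - x) + b • (z' - x))
      ≤ a * eunorm (z - x) + b * eunorm (z' - x) := by
    refine (eunorm_add_le _ _).trans ?_
    have := eunorm_smul_le a (z - x)
    have := eunorm_smul_le b (z' - x)
    rw [abs_of_nonneg ha] at *
    rw [abs_of_nonneg hb] at *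
    gcongr <;> assumption
  by_cases hA : a = 0
  · subst hA
    have hb1 : b = 1 := by linarith
    subst hb1
    refine lt_of_le_of_lt h3 ?_
    simpa using hz'
  · have ha' : 0 < a := lt_of_le_of_ne ha (Ne.symm hA)
    refine lt_of_le_of_lt h3 ?_
    have t1 : a * eunorm (z - x) < a * s := mul_lt_mul_of_pos_left hz ha'
    have t2 : b * eunorm (z' - x) ≤ b * s := mul_le_mul_of_nonneg_left hz'.le hb
    have t3 : a * s + b * s = s := by rw [← add_mul, hab, one_mul]
    linarith

theorem multilinear_norm_le {ι : Type} [Fintype ι] [DecidableEq ι] {F : Type}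
    [NormedAddCommGroup F] [NormedSpace ℝ F] (j : ℕ)
    (T : ContinuousMultilinearMap ℝ (fun _ : Fin j => ((i : ι) → ℝ)) F) (M : ℝ) (hM : 0 ≤ M)
    (hT : ∀ t : Fin j → ι, ‖T (fun m => (Pi.single (t m) 1 : (i : ι) → ℝ))‖ ≤ M) :
    ‖T‖ ≤ (Fintype.card ι : ℝ) ^ j * M := by
  apply ContinuousMultilinearMap.opNorm_le_bound (by positivity)
  intro u
  have hrep : u = fun m => ∑ b : ι, u m b • (Pi.single b (1:ℝ) : (i : ι) → ℝ) := by
    funext m i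
    simp [Finset.sum_apply, Pi.single_apply, Finset.sum_ite_eq']
  conv_lhs => rw [hrep]
  rw [T.map_sum (g := fun m b => u m b • (Pi.single b (1:ℝ) : (i : ι) → ℝ))]
  calc ‖∑ r : Fin j → ι, T fun m => u m (r m) • (Pi.single (r m) (1:ℝ) : (i : ι) → ℝ)‖
      ≤ ∑ r : Fin j → ι, ‖T fun m => u m (r m) • (Pi.single (r m) (1:ℝ) : (i : ι) → ℝ)‖ := norm_sum_le _ _
    _ ≤ ∑ _r : Fin j → ι, M * ∏ m, ‖u m‖ := by
        apply Finset.sum_le_sum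
        intro r _
        have he : (fun m => u m (r m) • (Pi.single (r m) (1:ℝ) : (i : ι) → ℝ))
            = fun m => u m (r m) • (fun m' => (Pi.single (r m') (1:ℝ) : (i : ι) → ℝ)) m := rfl
        rw [he, T.map_smul_univ]
        rw [norm_smul]
        calc ‖∏ m, u m (r m)‖ * ‖T fun m' => (Pi.single (r m') (1:ℝ) : (i : ι) → ℝ)‖
            ≤ ‖∏ m, u m (r m)‖ * M := by
              apply mul_le_mul_of_nonneg_left (hT r) (norm_nonneg _)
          _ ≤ (∏ m, ‖u m‖) * M := by
              apply mul_le_mul_of_nonneg_right _ hM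
              rw [norm_prod]
              exact Finset.prod_le_prod (fun m _ => norm_nonneg _)
                (fun m _ => norm_le_pi_norm (u m) (r m))
          _ = M * ∏ m, ‖u m‖ := mul_comm _ _
    _ = (Fintype.card ι : ℝ) ^ j * M * ∏ m, ‖u m‖ := by
        rw [Finset.sum_const, Finset.card_univ]
        simp [Fintype.card_fun, mul_assoc]
end eunorm_lemmas

theorem core_estimate {ι : Type} [Fintype ι] [DecidableEq ι] {F : Type}
    [NormedAddCommGroup F] [NormedSpace ℝ F]
    (σ : ((i : ι) → ℝ) → F) (j : ℕ) (h s M₂ ω : ℝ) (hh : 0 < h) (hM₂ : 0 ≤ M₂) (hω : 0 ≤ ω)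
    (x y : ι → ℝ) (hy : eunorm (y - x) ≤ s)
    (hcont : ContDiffOn ℝ j σ {z : ι → ℝ | eunorm (z - x) < s + j * h + h})
    (hbound : ∀ z : ι → ℝ, eunorm (z - x) < s + j * h + h → ‖σ z‖ ≤ M₂)
    (hosc : ∀ z : ι → ℝ, eunorm (z - x) < s + j * h + h → ∀ z' : ι → ℝ,
      eunorm (z' - x) < s + j * h + h →
      ‖iteratedFDeriv ℝ j σ z - iteratedFDeriv ℝ j σ z'‖ ≤ ω) :
    ‖iteratedFDeriv ℝ j σ y‖
      ≤ (Fintype.card ι : ℝ) ^ j * ((2 / h) ^ j * M₂ + 4 ^ j * ω) := by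
  apply multilinear_norm_le
  · positivity
  intro t
  set u : Fin j → ((i : ι) → ℝ) := fun m => (Pi.single (t m) 1 : (i : ι) → ℝ) with hudef
  have hbox : ∀ c : Fin j → ℝ, (∀ i, c i ∈ Set.Icc 0 h) →
      y + ∑ i, c i • u i ∈ {z : ι → ℝ | eunorm (z - x) < s + j * h + h} := by
    intro c hc
    have h1 : eunorm (∑ i, c i • u i) ≤ (j:ℝ) * h := by
      refine (eunorm_sum_le _).trans ?_
      calc ∑ i, eunorm (c i • u i) ≤ ∑ _i : Fin j, h := by
            apply Finset.sum_le_sum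
            intro i _
            refine (eunorm_smul_le _ _).trans ?_
            rw [hudef, eunorm_single, mul_one, abs_of_nonneg (hc i).1]
            exact (hc i).2
        _ = (j:ℝ) * h := by simp [mul_comm]
    have h2 : y + ∑ i, c i • u i - x = (y - x) + ∑ i, c i • u i := by abel
    show eunorm (y + ∑ i, c i • u i - x) < s + j * h + h
    rw [h2]
    calc eunorm ((y - x) + ∑ i, c i • u i)
        ≤ eunorm (y - x) + eunorm (∑ i, c i • u i) := eunorm_add_le _ _
      _ ≤ s + (j:ℝ) * h := add_le_add hy h1
      _ < s + (j:ℝ) * h + h := by linarith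
  have hkey := Sdiff_key j σ {z : ι → ℝ | eunorm (z - x) < s + j * h + h}
    (isOpen_eball x (s + j * h + h)) hcont h hh.le u ω
    (fun z hz z' hz' => hosc z hz z' hz') y hbox
  have hprod1 : (∏ i, ‖u i‖) = 1 := by
    apply Finset.prod_eq_one
    intro i _
    rw [hudef]
    simp [Pi.norm_single]
  rw [hprod1, mul_one] at hkey
  have hSb : ‖Sdiff h j u σ y‖ ≤ 2 ^ j * M₂ :=
    Sdiff_norm_le h hh.le j u σ M₂ y (fun c hc => hbound _ (hbox c hc))
  have htri : h ^ j * ‖iteratedFDeriv ℝ j σ y u‖ ≤ 2 ^ j * M₂ + 4 ^ j * h ^ j * ω := by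
    have e1 : ‖h ^ j • iteratedFDeriv ℝ j σ y u‖ = h ^ j * ‖iteratedFDeriv ℝ j σ y u‖ := by
      rw [norm_smul, Real.norm_of_nonneg (pow_nonneg hh.le j)]
    have e2 := norm_add_le (h ^ j • iteratedFDeriv ℝ j σ y u - Sdiff h j u σ y) (Sdiff h j u σ y)
    rw [sub_add_cancel] at e2
    rw [← e1]
    refine e2.trans ?_
    rw [norm_sub_rev]
    have := add_le_add hkey hSb
    linarith
  have hpow : (0:ℝ) < h ^ j := pow_pos hh j
  rw [← mul_le_mul_iff_right₀ hpow]
  have e3 : h ^ j * ((2 / h) ^ j * M₂ + 4 ^ j * ω) = 2 ^ j * M₂ + 4 ^ j * h ^ j * ω := by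
    rw [div_pow]
    field_simp
  rw [e3]
  exact htri

/-- Auxiliary recursive bound. -/
def EfunAux (L M2 M1 h r ra : ℝ) (k : ℕ) : ℕ → ℝ
  | 0 => L * (M2 / h ^ k + M1 * ra)
  | (g+1) => L * (M2 * h ^ (g+1) / h ^ k + r * EfunAux L M2 M1 h r ra k g)

set_option maxHeartbeats 3000000 in
/-- **Interpolation inequality on balls of arbitrary radius of the flat cylinder
`ℝ^d × T^e`** (the flat-torus case of Lemma 3.5 of Hein–Tosatti): for `ℤ^e`-periodic
`σ ∈ C^{k,α}_loc(B_q(p,2R))`,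
`Σ_{j=1}^k (R-ρ)^j sup_{B_q(p,ρ)} ‖D^j σ‖ ≤ C_k ((R-ρ)^{k+α} [D^k σ]_{C^α(B_q(p,R))}
+ sup_{B_q(p,R)} ‖σ‖)` with `C_k` independent of the center and the radii. -/
theorem interpolation_cylinder
    (d e N k : ℕ) (he : 1 ≤ e) (hN : 1 ≤ N) (hk : 1 ≤ k)
    (α : ℝ) (hα0 : 0 < α) (hα1 : α < 1) :
    ∃ C : ℝ, 0 < C ∧
      ∀ (p : (Fin d ⊕ Fin e) → ℝ) (ρ R : ℝ), 0 < ρ → ρ < R →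
      ∀ σ : ((Fin d ⊕ Fin e) → ℝ) → (Fin N → ℝ),
        (∀ v : Fin e → ℤ, ∀ x ∈ Bq d e p (2 * R), σ (x + latv d e v) = σ x) →
        ContDiffOn ℝ (k : ℕ) σ (Bq d e p (2 * R)) →
        (∀ x ∈ Bq d e p (2 * R), ∃ ε > 0, ∃ L : ℝ,
          ∀ y ∈ Bq d e p (2 * R), ∀ y' ∈ Bq d e p (2 * R),
            eunorm (y - x) < ε → eunorm (y' - x) < ε →
            ‖iteratedFDeriv ℝ k σ y - iteratedFDeriv ℝ k σ y'‖
              ≤ L * eunorm (y - y') ^ α) →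
        ∀ M₁ M₂ : ℝ, 0 ≤ M₁ → 0 ≤ M₂ →
        (∀ x ∈ Bq d e p R, ∀ x' ∈ Bq d e p R,
          ‖iteratedFDeriv ℝ k σ x - iteratedFDeriv ℝ k σ x'‖
            ≤ M₁ * eunorm (x - x') ^ α) →
        (∀ x ∈ Bq d e p R, ‖σ x‖ ≤ M₂) →
        ∀ j, 1 ≤ j → j ≤ k → ∀ x ∈ Bq d e p ρ,
          (R - ρ) ^ j * ‖iteratedFDeriv ℝ j σ x‖
            ≤ C * ((R - ρ) ^ ((k : ℝ) + α) * M₁ + M₂) := by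
  classical
  have hkR : (1:ℝ) ≤ (k:ℝ) := by exact_mod_cast hk
  set nn : ℝ := (d:ℝ) + (e:ℝ) with hnn
  have hn1 : (1:ℝ) ≤ nn := by
    have : (1:ℝ) ≤ (e:ℝ) := by exact_mod_cast he
    have : (0:ℝ) ≤ (d:ℝ) := by positivity
    rw [hnn]; linarith
  set Λ : ℝ := (8 * nn) ^ k with hΛ
  have hΛ1 : (1:ℝ) ≤ Λ := by
    rw [hΛ]; apply one_le_pow₀; linarith
  have h4k1 : (1:ℝ) ≤ 4 * (k:ℝ)^2 := by nlinarith
  set Dc : ℝ := Λ * (4 * (k:ℝ)^2) ^ k + Λ + 1 with hDc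
  have hDc1 : (1:ℝ) ≤ Dc := by
    rw [hDc]
    have : (0:ℝ) ≤ Λ * (4 * (k:ℝ)^2) ^ k := by positivity
    linarith [hΛ1]
  have hDc0 : (0:ℝ) < Dc := lt_of_lt_of_le one_pos hDc1
  refine ⟨(2 * Dc) ^ (k+1), by positivity, ?_⟩
  intro p ρ R hρ hρR σ _hper hcont _hloc M₁ M₂ hM₁ hM₂ hH hS j hj1 hjk x hx
  set r : ℝ := R - ρ with hrdef
  have hr : 0 < r := by rw [hrdef]; linarith
  set h : ℝ := r / (4 * (k:ℝ)^2) with hhdef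
  have h4k0 : (0:ℝ) < 4 * (k:ℝ)^2 := lt_of_lt_of_le one_pos h4k1
  have hh : 0 < h := div_pos hr h4k0
  have hrh : r / h = 4 * (k:ℝ)^2 := by
    rw [hhdef]; field_simp
  have hrα0 : (0:ℝ) ≤ r ^ α := Real.rpow_nonneg hr.le α
  obtain ⟨v, hv⟩ := hx
  have hball : ∀ z : (Fin d ⊕ Fin e) → ℝ, eunorm (z - x) < r → z ∈ Bq d e p R := by
    intro z hz
    refine ⟨v, ?_⟩
    have e1 : z - p - latv d e v = (z - x) + (x - p - latv d e v) := by abel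
    rw [e1]
    calc eunorm ((z - x) + (x - p - latv d e v))
        ≤ eunorm (z - x) + eunorm (x - p - latv d e v) := eunorm_add_le _ _
      _ < r + ρ := add_lt_add hz hv
      _ = R := by rw [hrdef]; ring
  have hball2 : Bq d e p R ⊆ Bq d e p (2*R) := by
    rintro z ⟨w, hw⟩
    exact ⟨w, hw.trans_le (by linarith)⟩
  have hBqo : IsOpen (Bq d e p (2*R)) := by
    have hset : Bq d e p (2*R) = ⋃ w : Fin e → ℤ, {z | eunorm (z - (p + latv d e w)) < 2*R} := by
      ext z
      simp only [Bq, mem_setOf_eq, mem_iUnion, sub_sub]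
    rw [hset]
    exact isOpen_iUnion (fun w => isOpen_eball _ _)
  have h2k2 : 2*(k:ℝ)^2*h = r/2 := by
    rw [hhdef]; field_simp; ring
  clear_value nn Λ Dc r h
  have hE0 : ∀ g, 0 ≤ EfunAux Λ M₂ M₁ h r (r ^ α) k g := by
    intro g
    induction g with
    | zero =>
      show 0 ≤ Λ * (M₂ / h ^ k + M₁ * r ^ α)
      have h1 : (0:ℝ) ≤ M₂ / h ^ k := by positivity
      have h2 : (0:ℝ) ≤ M₁ * r ^ α := mul_nonneg hM₁ hrα0
      exact mul_nonneg (by linarith) (add_nonneg h1 h2)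
    | succ g IH =>
      show 0 ≤ Λ * (M₂ * h ^ (g+1) / h ^ k + r * EfunAux Λ M₂ M₁ h r (r ^ α) k g)
      have h1 : (0:ℝ) ≤ M₂ * h ^ (g+1) / h ^ k := by positivity
      have h2 : (0:ℝ) ≤ r * EfunAux Λ M₂ M₁ h r (r ^ α) k g := mul_nonneg hr.le IH
      exact mul_nonneg (by linarith) (add_nonneg h1 h2)
  have hcard : ((Fintype.card (Fin d ⊕ Fin e) : ℕ) : ℝ) = nn := by
    simp [hnn]
  -- the main downward induction
  have claim : ∀ g jj, jj + g = k → 1 ≤ jj → ∀ y : (Fin d ⊕ Fin e) → ℝ,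
      eunorm (y - x) ≤ ((jj:ℝ) - 1) * (2*(k:ℝ)*h) →
      ‖iteratedFDeriv ℝ jj σ y‖ ≤ EfunAux Λ M₂ M₁ h r (r ^ α) k g := by
    intro g
    induction g with
    | zero =>
      intro jj hjjk hjj1 y hy
      have hjj : jj = k := by omega
      subst jj
      have hrad : ((k:ℝ)-1)*(2*(k:ℝ)*h) + (k:ℝ)*h + h ≤ r/2 := by
        rw [← h2k2]
        nlinarith [hh.le, hkR]
      have hsub : ∀ z : (Fin d ⊕ Fin e) → ℝ,
          eunorm (z - x) < ((k:ℝ)-1)*(2*(k:ℝ)*h) + (k:ℝ)*h + h → z ∈ Bq d e p R := by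
        intro z hz
        exact hball z (lt_of_lt_of_le hz (by linarith))
      have hcore := core_estimate σ k h (((k:ℝ)-1)*(2*(k:ℝ)*h)) M₂ (M₁ * r ^ α)
        hh hM₂ (mul_nonneg hM₁ hrα0) x y hy
        (hcont.mono (fun z hz => hball2 (hsub z hz)))
        (fun z hz => hS z (hsub z hz))
        (fun z hz z' hz' => by
          refine (hH z (hsub z hz) z' (hsub z' hz')).trans ?_
          refine mul_le_mul_of_nonneg_left ?_ hM₁
          refine Real.rpow_le_rpow (eunorm_nonneg _) ?_ hα0.le
          have e2 : z - z' = (z - x) - (z' - x) := by abel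
          rw [e2]
          refine (eunorm_sub_le _ _).trans ?_
          linarith)
      refine hcore.trans ?_
      rw [hcard]
      show nn ^ k * ((2 / h) ^ k * M₂ + 4 ^ k * (M₁ * r ^ α))
        ≤ Λ * (M₂ / h ^ k + M₁ * r ^ α)
      have hhne : h ≠ 0 := ne_of_gt hh
      have expand : nn ^ k * ((2 / h) ^ k * M₂ + 4 ^ k * (M₁ * r ^ α))
          = (2*nn) ^ k / h ^ k * M₂ + (4*nn) ^ k * (M₁ * r ^ α) := by
        rw [div_pow, mul_pow, mul_pow]
        field_simp
      have c1 : ((2*nn) ^ k : ℝ) ≤ Λ := by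
        rw [hΛ]
        exact pow_le_pow_left₀ (by linarith) (by linarith) k
      have c2 : ((4*nn) ^ k : ℝ) ≤ Λ := by
        rw [hΛ]
        exact pow_le_pow_left₀ (by linarith) (by linarith) k
      rw [expand]
      have e3 : Λ * (M₂ / h ^ k + M₁ * r ^ α) = Λ / h ^ k * M₂ + Λ * (M₁ * r ^ α) := by
        field_simp
      rw [e3]
      gcongr
    | succ g IH =>
      intro jj hjjk hjj1 y hy
      have hjjk' : jj < k := by omega
      have hjjR : (1:ℝ) ≤ (jj:ℝ) := by exact_mod_cast hjj1
      have hjjkR : (jj:ℝ) + 1 ≤ (k:ℝ) := by exact_mod_cast hjjk'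
      have hjk : (jj:ℝ) ≤ (k:ℝ) := by linarith
      have h2kh : (0:ℝ) ≤ 2*(k:ℝ)*h := mul_nonneg (by positivity) hh.le
      have t1 : (jj:ℝ)*h ≤ (k:ℝ)*h := mul_le_mul_of_nonneg_right hjk hh.le
      have t3 : 1*h ≤ (k:ℝ)*h := mul_le_mul_of_nonneg_right hkR hh.le
      have hrad : ((jj:ℝ)-1)*(2*(k:ℝ)*h) + (jj:ℝ)*h + h ≤ r/2 := by
        rw [← h2k2]
        have t2 : ((jj:ℝ)-1)*(2*(k:ℝ)*h) ≤ ((k:ℝ)-1)*(2*(k:ℝ)*h) :=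
          mul_le_mul_of_nonneg_right (by linarith) h2kh
        have e : ((k:ℝ)-1)*(2*(k:ℝ)*h) = 2*(k:ℝ)^2*h - 2*((k:ℝ)*h) := by ring
        linarith
      have hsub : ∀ z : (Fin d ⊕ Fin e) → ℝ,
          eunorm (z - x) < ((jj:ℝ)-1)*(2*(k:ℝ)*h) + (jj:ℝ)*h + h → z ∈ Bq d e p R := by
        intro z hz
        exact hball z (lt_of_lt_of_le hz (by linarith))
      have hstep : ∀ w : (Fin d ⊕ Fin e) → ℝ,
          eunorm (w - x) < ((jj:ℝ)-1)*(2*(k:ℝ)*h) + (jj:ℝ)*h + h →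
          ‖iteratedFDeriv ℝ (jj+1) σ w‖ ≤ EfunAux Λ M₂ M₁ h r (r ^ α) k g := by
        intro w hw
        apply IH (jj+1) (by omega) (by omega) w
        have hle : ((jj:ℝ)-1)*(2*(k:ℝ)*h) + (jj:ℝ)*h + h ≤ (jj:ℝ)*(2*(k:ℝ)*h) := by
          have e : (jj:ℝ)*(2*(k:ℝ)*h) - ((jj:ℝ)-1)*(2*(k:ℝ)*h) = 2*((k:ℝ)*h) := by ring
          linarith
        push_cast
        linarith
      have hosc : ∀ z : (Fin d ⊕ Fin e) → ℝ,
          eunorm (z - x) < ((jj:ℝ)-1)*(2*(k:ℝ)*h) + (jj:ℝ)*h + h →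
          ∀ z' : (Fin d ⊕ Fin e) → ℝ,
          eunorm (z' - x) < ((jj:ℝ)-1)*(2*(k:ℝ)*h) + (jj:ℝ)*h + h →
          ‖iteratedFDeriv ℝ jj σ z - iteratedFDeriv ℝ jj σ z'‖
            ≤ r * EfunAux Λ M₂ M₁ h r (r ^ α) k g := by
        intro z hz z' hz'
        have hdiffAt : ∀ w ∈ Bq d e p (2*R), DifferentiableAt ℝ (iteratedFDeriv ℝ jj σ) w := by
          intro w hw2
          have h1 := hcont.differentiableOn_iteratedFDerivWithin
            (show ((jj:ℕ) : WithTop ℕ∞) < ((k:ℕ) : WithTop ℕ∞) by exact_mod_cast hjjk')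
            hBqo.uniqueDiffOn
          have h2 : DifferentiableWithinAt ℝ (iteratedFDeriv ℝ jj σ) (Bq d e p (2*R)) w :=
            (h1 w hw2).congr
              (fun z hz => (iteratedFDerivWithin_of_isOpen jj hBqo hz).symm)
              ((iteratedFDerivWithin_of_isOpen jj hBqo hw2).symm)
          exact h2.differentiableAt (hBqo.mem_nhds hw2)
        have hMVT := (convex_eunorm_ball x (((jj:ℝ)-1)*(2*(k:ℝ)*h) + (jj:ℝ)*h + h)).norm_image_sub_le_of_norm_hasFDerivWithin_le
          (f' := fun w => fderiv ℝ (iteratedFDeriv ℝ jj σ) w)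
          (fun w hw => ((hdiffAt w (hball2 (hsub w hw))).hasFDerivAt).hasFDerivWithinAt)
          (fun w hw => by
            rw [norm_fderiv_iteratedFDeriv]
            exact hstep w hw)
          hz' hz
        refine hMVT.trans ?_
        have h5 : ‖z - z'‖ ≤ r := by
          refine (norm_le_eunorm _).trans ?_
          have e2 : z - z' = (z - x) - (z' - x) := by abel
          rw [e2]
          refine (eunorm_sub_le _ _).trans ?_
          linarith
        calc EfunAux Λ M₂ M₁ h r (r ^ α) k g * ‖z - z'‖
            ≤ EfunAux Λ M₂ M₁ h r (r ^ α) k g * r :=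
              mul_le_mul_of_nonneg_left h5 (hE0 g)
          _ = r * EfunAux Λ M₂ M₁ h r (r ^ α) k g := mul_comm _ _
      have hcore := core_estimate σ jj h (((jj:ℝ)-1)*(2*(k:ℝ)*h)) M₂
        (r * EfunAux Λ M₂ M₁ h r (r ^ α) k g)
        hh hM₂ (mul_nonneg hr.le (hE0 g)) x y hy
        (((hcont.of_le (show ((jj:ℕ) : WithTop ℕ∞) ≤ ((k:ℕ) : WithTop ℕ∞) by
          exact_mod_cast hjjk'.le)).mono (fun z hz => hball2 (hsub z hz))))
        (fun z hz => hS z (hsub z hz))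
        hosc
      refine hcore.trans ?_
      rw [hcard]
      show nn ^ jj * ((2 / h) ^ jj * M₂ + 4 ^ jj * (r * EfunAux Λ M₂ M₁ h r (r ^ α) k g))
        ≤ Λ * (M₂ * h ^ (g+1) / h ^ k + r * EfunAux Λ M₂ M₁ h r (r ^ α) k g)
      have hhne : h ≠ 0 := ne_of_gt hh
      have hpowsplit : (h:ℝ) ^ k = h ^ jj * h ^ (g+1) := by
        rw [← pow_add]; congr 1; omega
      have e4 : M₂ * h ^ (g+1) / h ^ k = M₂ / h ^ jj := by
        rw [hpowsplit]
        field_simp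
        try ring
      rw [e4]
      have expand : nn ^ jj * ((2 / h) ^ jj * M₂ + 4 ^ jj * (r * EfunAux Λ M₂ M₁ h r (r ^ α) k g))
          = (2*nn) ^ jj / h ^ jj * M₂
            + (4*nn) ^ jj * (r * EfunAux Λ M₂ M₁ h r (r ^ α) k g) := by
        rw [div_pow, mul_pow, mul_pow]
        field_simp
      have c1 : ((2*nn) ^ jj : ℝ) ≤ Λ := by
        rw [hΛ]
        calc ((2*nn) ^ jj : ℝ) ≤ (8*nn) ^ jj := pow_le_pow_left₀ (by linarith) (by linarith) jj
          _ ≤ (8*nn) ^ k := pow_le_pow_right₀ (by linarith) (by omega)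
      have c2 : ((4*nn) ^ jj : ℝ) ≤ Λ := by
        rw [hΛ]
        calc ((4*nn) ^ jj : ℝ) ≤ (8*nn) ^ jj := pow_le_pow_left₀ (by linarith) (by linarith) jj
          _ ≤ (8*nn) ^ k := pow_le_pow_right₀ (by linarith) (by omega)
      rw [expand]
      have e3 : Λ * (M₂ / h ^ jj + r * EfunAux Λ M₂ M₁ h r (r ^ α) k g)
          = Λ / h ^ jj * M₂ + Λ * (r * EfunAux Λ M₂ M₁ h r (r ^ α) k g) := by
        field_simp
      rw [e3]
      gcongr
      exact mul_nonneg hr.le (hE0 g)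
  -- final numeric bound
  have hX0 : (0:ℝ) ≤ r ^ ((k:ℝ) + α) * M₁ + M₂ := by
    have := Real.rpow_nonneg hr.le ((k:ℝ) + α)
    nlinarith
  have hrkα : r ^ ((k:ℝ) + α) = r ^ k * r ^ α := by
    rw [Real.rpow_add hr, Real.rpow_natCast]
  have hfin : ∀ g jj, jj + g = k →
      r ^ jj * EfunAux Λ M₂ M₁ h r (r ^ α) k g
        ≤ (2*Dc) ^ (g+1) * (r ^ ((k:ℝ) + α) * M₁ + M₂) := by
    intro g
    induction g with
    | zero =>
      intro jj hjjk
      have hjj : jj = k := by omega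
      subst jj
      show r ^ k * (Λ * (M₂ / h ^ k + M₁ * r ^ α)) ≤ _
      have hhne : h ≠ 0 := ne_of_gt hh
      have e1 : r ^ k * (Λ * (M₂ / h ^ k + M₁ * r ^ α))
          = Λ * (r/h) ^ k * M₂ + Λ * (r ^ k * r ^ α) * M₁ := by
        rw [div_pow]
        field_simp
      rw [e1, hrh]
      have e2 : r ^ k * r ^ α = r ^ ((k:ℝ) + α) := by
        rw [Real.rpow_add hr, Real.rpow_natCast]
      rw [e2]
      have d1 : Λ * (4 * (k:ℝ)^2) ^ k ≤ Dc := by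
        rw [hDc]
        nlinarith [hΛ1]
      have d2 : Λ ≤ Dc := by
        rw [hDc]
        have : (0:ℝ) ≤ Λ * (4 * (k:ℝ)^2) ^ k := by positivity
        linarith
      have hpow1 : ((2*Dc) ^ (0+1) : ℝ) = 2*Dc := by norm_num
      rw [hpow1]
      have hXM : (0:ℝ) ≤ r ^ ((k:ℝ) + α) := Real.rpow_nonneg hr.le _
      nlinarith [mul_le_mul_of_nonneg_right d1 hM₂, mul_le_mul_of_nonneg_right d2
        (mul_nonneg hXM hM₁), hDc0, hM₂, mul_nonneg hXM hM₁]
    | succ g IH =>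
      intro jj hjjk
      show r ^ jj * (Λ * (M₂ * h ^ (g+1) / h ^ k + r * EfunAux Λ M₂ M₁ h r (r ^ α) k g)) ≤ _
      have hhne : h ≠ 0 := ne_of_gt hh
      have hpowsplit : (h:ℝ) ^ k = h ^ jj * h ^ (g+1) := by
        rw [← pow_add]; congr 1; omega
      have e1 : r ^ jj * (Λ * (M₂ * h ^ (g+1) / h ^ k + r * EfunAux Λ M₂ M₁ h r (r ^ α) k g))
          = Λ * (r/h) ^ jj * M₂ + Λ * (r ^ (jj+1) * EfunAux Λ M₂ M₁ h r (r ^ α) k g) := by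
        rw [hpowsplit, div_pow]
        field_simp
        ring
      rw [e1, hrh]
      have hIH := IH (jj+1) (by omega)
      have d1 : Λ * (4 * (k:ℝ)^2) ^ jj ≤ Dc := by
        rw [hDc]
        have hmono : ((4 * (k:ℝ)^2) ^ jj : ℝ) ≤ (4 * (k:ℝ)^2) ^ k :=
          pow_le_pow_right₀ (by linarith) (by omega)
        nlinarith [hΛ1]
      have d2 : Λ ≤ Dc := by
        rw [hDc]
        have : (0:ℝ) ≤ Λ * (4 * (k:ℝ)^2) ^ k := by positivity
        linarith
      have hrE : (0:ℝ) ≤ r ^ (jj+1) * EfunAux Λ M₂ M₁ h r (r ^ α) k g :=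
        mul_nonneg (pow_nonneg hr.le _) (hE0 g)
      have step1 : Λ * (r ^ (jj+1) * EfunAux Λ M₂ M₁ h r (r ^ α) k g)
          ≤ Dc * ((2*Dc) ^ (g+1) * (r ^ ((k:ℝ) + α) * M₁ + M₂)) := by
        calc Λ * (r ^ (jj+1) * EfunAux Λ M₂ M₁ h r (r ^ α) k g)
            ≤ Dc * (r ^ (jj+1) * EfunAux Λ M₂ M₁ h r (r ^ α) k g) :=
              mul_le_mul_of_nonneg_right d2 hrE
          _ ≤ Dc * ((2*Dc) ^ (g+1) * (r ^ ((k:ℝ) + α) * M₁ + M₂)) :=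
              mul_le_mul_of_nonneg_left hIH (by linarith)
      have step2 : Λ * (4 * (k:ℝ)^2) ^ jj * M₂ ≤ Dc * (r ^ ((k:ℝ) + α) * M₁ + M₂) := by
        have : Λ * (4 * (k:ℝ)^2) ^ jj * M₂ ≤ Dc * M₂ :=
          mul_le_mul_of_nonneg_right d1 hM₂
        have h2 : Dc * M₂ ≤ Dc * (r ^ ((k:ℝ) + α) * M₁ + M₂) := by
          apply mul_le_mul_of_nonneg_left _ hDc0.le
          have hXM : (0:ℝ) ≤ r ^ ((k:ℝ) + α) := Real.rpow_nonneg hr.le _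
          nlinarith
        linarith
      have hpowg : (1:ℝ) ≤ (2*Dc) ^ (g+1) := one_le_pow₀ (by linarith)
      have final : Dc * (r ^ ((k:ℝ) + α) * M₁ + M₂)
            + Dc * ((2*Dc) ^ (g+1) * (r ^ ((k:ℝ) + α) * M₁ + M₂))
          ≤ (2*Dc) ^ (g+1+1) * (r ^ ((k:ℝ) + α) * M₁ + M₂) := by
        have e5 : (2*Dc) ^ (g+1+1) = 2*Dc * (2*Dc) ^ (g+1) := by
          rw [pow_succ]; ring
        rw [e5]
        nlinarith [hX0, hDc0, hpowg, mul_nonneg (mul_nonneg hDc0.le (sub_nonneg.2 hpowg)) hX0]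
      linarith
  have hxx : eunorm (x - x) ≤ ((j:ℝ) - 1) * (2*(k:ℝ)*h) := by
    have hzero : eunorm ((x:(Fin d ⊕ Fin e) → ℝ) - x) = 0 := by
      simp [eunorm]
    rw [hzero]
    have hjR : (1:ℝ) ≤ (j:ℝ) := by exact_mod_cast hj1
    have : (0:ℝ) ≤ ((j:ℝ) - 1) := by linarith
    positivity
  have hmain := claim (k - j) j (by omega) hj1 x hxx
  calc r ^ j * ‖iteratedFDeriv ℝ j σ x‖
      ≤ r ^ j * EfunAux Λ M₂ M₁ h r (r ^ α) k (k - j) :=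
        mul_le_mul_of_nonneg_left hmain (pow_nonneg hr.le j)
    _ ≤ (2*Dc) ^ (k - j + 1) * (r ^ ((k:ℝ) + α) * M₁ + M₂) := hfin (k - j) j (by omega)
    _ ≤ (2*Dc) ^ (k + 1) * (r ^ ((k:ℝ) + α) * M₁ + M₂) := by
        apply mul_le_mul_of_nonneg_right _ hX0
        exact pow_le_pow_right₀ (by linarith) (by omega)
end helpers
end
end
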